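/- Let B(u,v) = (uv)^{1/4}. There is a constant C₁ > 0 such that for all points (u₊,v₊), (u₋,v₋) in D₀ = {(u,v): u,v>0, uv ≥ 1/2} whose midpoint (u,v) = ((u₊+u₋)/2, (v₊+v₋)/2) also lies in D₀, one has B(u,v) − (B(u₊,v₊)+B(u₋,v₋))/2 ≥ C₁ (v^{1/4}/u^{7/4}) (u₊ − u₋)². -/
import Mathlib

lemma aux_sqrt_avg {a b : ℝ} (ha : 0 ≤ a) (hb : 0 ≤ b) :
    (Real.sqrt a + Real.sqrt b)/2 ≤ Real.sqrt ((a+b)/2) := by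
  rw [← Real.sqrt_sq (by positivity : (0:ℝ) ≤ (Real.sqrt a + Real.sqrt b)/2)]
  apply Real.sqrt_le_sqrt
  nlinarith [sq_nonneg (Real.sqrt a - Real.sqrt b), Real.sq_sqrt ha, Real.sq_sqrt hb]

lemma aux_CS {p q r s : ℝ} (hp : 0 ≤ p) (hq : 0 ≤ q) (hr : 0 ≤ r) (hs : 0 ≤ s) :
    Real.sqrt p * Real.sqrt r + Real.sqrt q * Real.sqrt s ≤ Real.sqrt ((p+q)*(r+s)) := by
  rw [← Real.sqrt_sq (by positivity : (0:ℝ) ≤ Real.sqrt p * Real.sqrt r + Real.sqrt q * Real.sqrt s)]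
  apply Real.sqrt_le_sqrt
  nlinarith [sq_nonneg (Real.sqrt p * Real.sqrt s - Real.sqrt q * Real.sqrt r),
    Real.sq_sqrt hp, Real.sq_sqrt hq, Real.sq_sqrt hr, Real.sq_sqrt hs,
    Real.sqrt_nonneg p, Real.sqrt_nonneg q, Real.sqrt_nonneg r, Real.sqrt_nonneg s]

lemma rpow_quarter {x : ℝ} (hx : 0 ≤ x) :
    x ^ ((1:ℝ)/4) = Real.sqrt (Real.sqrt x) := by
  rw [Real.sqrt_eq_rpow, Real.sqrt_eq_rpow, ← Real.rpow_mul hx]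
  norm_num

lemma rpow_74 {x : ℝ} (hx : 0 < x) :
    x ^ ((7:ℝ)/4) = x * Real.sqrt x * Real.sqrt (Real.sqrt x) := by
  rw [(rpow_quarter hx.le).symm.trans rfl, Real.sqrt_eq_rpow]
  nth_rewrite 2 [← Real.rpow_one x]
  rw [← Real.rpow_add hx, ← Real.rpow_add hx]
  norm_num

lemma aux_onevar {a b : ℝ} (ha : 0 < a) (hb : 0 < b) :
    (a - b)^2 ≤ 64 * (((a+b)/2) * Real.sqrt ((a+b)/2) * Real.sqrt (Real.sqrt ((a+b)/2)))
      * (Real.sqrt (Real.sqrt ((a+b)/2)) - Real.sqrt ((Real.sqrt a + Real.sqrt b)/2)) := by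
  set x := Real.sqrt a with hxd
  set y := Real.sqrt b with hyd
  have hx : 0 < x := Real.sqrt_pos.mpr ha
  have hy : 0 < y := Real.sqrt_pos.mpr hb
  set M := Real.sqrt ((a+b)/2) with hMd
  have hM : 0 < M := Real.sqrt_pos.mpr (by positivity)
  set M4 := Real.sqrt M with hM4d
  have hM4 : 0 < M4 := Real.sqrt_pos.mpr hM
  set S := Real.sqrt ((x + y)/2) with hSd
  have hS : 0 < S := Real.sqrt_pos.mpr (by positivity)
  have ha2 : x^2 = a := Real.sq_sqrt ha.le
  have hb2 : y^2 = b := Real.sq_sqrt hb.le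
  have hM2 : M^2 = (a+b)/2 := Real.sq_sqrt (by positivity)
  have hM42 : M4^2 = M := Real.sq_sqrt hM.le
  have hS2 : S^2 = (x+y)/2 := Real.sq_sqrt (by positivity)
  have hsM : (x+y)/2 ≤ M := by
    rw [hMd, hxd, hyd]
    exact aux_sqrt_avg ha.le hb.le
  have hSM4 : S ≤ M4 := by
    rw [hSd, hM4d]
    exact Real.sqrt_le_sqrt hsM
  have hd : 0 ≤ M4 - S := by linarith
  have hS2M : S^2 ≤ M := by rw [hS2]; exact hsM
  rw [← ha2, ← hb2] at hM2 ⊢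
  have key : (x^2 - y^2)^2
      = (16*(S^2*S^2)*((M4+S)*(M+S^2)))*(M4-S) := by
    linear_combination (16*(S^2 + (x+y)/2)*(S^2*S^2 - (x-y)^2/4)) * hS2
      + (-16*S^2*S^2) * hM2 + (-16*S^2*S^2*(M+S^2)) * hM42
  have c1 : S^2*S^2 ≤ M*M := mul_le_mul hS2M hS2M (by positivity) hM.le
  have c2 : M4 + S ≤ 2*M4 := by linarith
  have c3 : M + S^2 ≤ 2*M := by linarith
  have c4 : (M4+S)*(M+S^2) ≤ (2*M4)*(2*M) :=
    mul_le_mul c2 c3 (by positivity) (by positivity)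
  have c5 : (S^2*S^2)*((M4+S)*(M+S^2)) ≤ (M*M)*((2*M4)*(2*M)) :=
    mul_le_mul c1 c4 (by positivity) (by positivity)
  have c6 : 16*(S^2*S^2)*((M4+S)*(M+S^2)) ≤ 64*(M^2*M*M4) := by nlinarith [c5]
  calc (x^2 - y^2)^2 = (16*(S^2*S^2)*((M4+S)*(M+S^2)))*(M4-S) := key
    _ ≤ (64*(M^2*M*M4))*(M4-S) := mul_le_mul_of_nonneg_right c6 hd
    _ = 64*(((x^2+y^2)/2)*M*M4)*(M4-S) := by rw [hM2]

/-- midpoint concavity defect of `B(u,v) = (uv)^{1/4}` on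
`D₀ = {(u,v) : u,v > 0, uv ≥ 1/2}`. -/
theorem stmt10 : ∃ C₁ > (0:ℝ), ∀ up vp um vm : ℝ,
    0 < up → 0 < vp → 1/2 ≤ up * vp →
    0 < um → 0 < vm → 1/2 ≤ um * vm →
    1/2 ≤ ((up + um)/2) * ((vp + vm)/2) →
    C₁ * (((vp + vm)/2) ^ ((1:ℝ)/4) / ((up + um)/2) ^ ((7:ℝ)/4)) * (up - um) ^ 2 ≤
      (((up + um)/2) * ((vp + vm)/2)) ^ ((1:ℝ)/4) -
        ((up * vp) ^ ((1:ℝ)/4) + (um * vm) ^ ((1:ℝ)/4)) / 2 := by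
  refine ⟨1/64, by norm_num, ?_⟩
  intro up vp um vm hup hvp _ hum hvm _ _
  have hmu : (0:ℝ) < (up + um)/2 := by positivity
  have hmv : (0:ℝ) < (vp + vm)/2 := by positivity
  rw [rpow_quarter (by positivity : (0:ℝ) ≤ ((up + um)/2) * ((vp + vm)/2)),
    rpow_quarter (by positivity : (0:ℝ) ≤ up * vp),
    rpow_quarter (by positivity : (0:ℝ) ≤ um * vm),
    rpow_quarter hmv.le, rpow_74 hmu]
  have e1 : Real.sqrt (Real.sqrt (((up+um)/2)*((vp+vm)/2)))
      = Real.sqrt (Real.sqrt ((up+um)/2)) * Real.sqrt (Real.sqrt ((vp+vm)/2)) := by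
    rw [Real.sqrt_mul hmu.le, Real.sqrt_mul (Real.sqrt_nonneg _)]
  have e2 : Real.sqrt (Real.sqrt (up*vp))
      = Real.sqrt (Real.sqrt up) * Real.sqrt (Real.sqrt vp) := by
    rw [Real.sqrt_mul hup.le, Real.sqrt_mul (Real.sqrt_nonneg _)]
  have e3 : Real.sqrt (Real.sqrt (um*vm))
      = Real.sqrt (Real.sqrt um) * Real.sqrt (Real.sqrt vm) := by
    rw [Real.sqrt_mul hum.le, Real.sqrt_mul (Real.sqrt_nonneg _)]
  rw [e1, e2, e3]
  have hCS := aux_CS (Real.sqrt_nonneg up) (Real.sqrt_nonneg um)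
    (Real.sqrt_nonneg vp) (Real.sqrt_nonneg vm)
  have hsplit : Real.sqrt ((Real.sqrt up + Real.sqrt um)*(Real.sqrt vp + Real.sqrt vm))
      = 2*(Real.sqrt ((Real.sqrt up + Real.sqrt um)/2)
            * Real.sqrt ((Real.sqrt vp + Real.sqrt vm)/2)) := by
    rw [show (Real.sqrt up + Real.sqrt um)*(Real.sqrt vp + Real.sqrt vm)
        = 4*(((Real.sqrt up + Real.sqrt um)/2)*((Real.sqrt vp + Real.sqrt vm)/2)) by ring,
      Real.sqrt_mul (by norm_num : (0:ℝ) ≤ 4), Real.sqrt_mul (by positivity),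
      show Real.sqrt 4 = 2 by
        rw [show (4:ℝ) = 2^2 by norm_num, Real.sqrt_sq (by norm_num : (0:ℝ) ≤ 2)]]
  rw [hsplit] at hCS
  have htau : Real.sqrt ((Real.sqrt vp + Real.sqrt vm)/2)
      ≤ Real.sqrt (Real.sqrt ((vp+vm)/2)) :=
    Real.sqrt_le_sqrt (aux_sqrt_avg hvp.le hvm.le)
  have honev := aux_onevar hup hum
  -- abbreviations
  set A := Real.sqrt (Real.sqrt ((up+um)/2)) with hA
  set B := Real.sqrt (Real.sqrt ((vp+vm)/2)) with hB
  set Sg := Real.sqrt ((Real.sqrt up + Real.sqrt um)/2) with hSg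
  set Tg := Real.sqrt ((Real.sqrt vp + Real.sqrt vm)/2) with hTg
  set Y := ((up+um)/2) * Real.sqrt ((up+um)/2) * A with hY
  have hYpos : 0 < Y := by
    rw [hY]
    have : 0 < A := Real.sqrt_pos.mpr (Real.sqrt_pos.mpr hmu)
    positivity
  have hBpos : 0 < B := Real.sqrt_pos.mpr (Real.sqrt_pos.mpr hmv)
  have hSgpos : 0 < Sg := Real.sqrt_pos.mpr (by positivity)
  -- hCS : √√up√√vp + √√um√√vm ≤ 2*(Sg*Tg)
  have g1 : (Real.sqrt (Real.sqrt up) * Real.sqrt (Real.sqrt vp)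
      + Real.sqrt (Real.sqrt um) * Real.sqrt (Real.sqrt vm))/2 ≤ Sg * B := by
    have : Sg * Tg ≤ Sg * B := mul_le_mul_of_nonneg_left htau hSgpos.le
    linarith
  -- honev : (up-um)^2 ≤ 64*Y*(A - Sg)
  have g2 : (1:ℝ)/64 * (B / Y) * (up-um)^2 ≤ B * (A - Sg) := by
    have h64 : (0:ℝ) < 64*Y := by linarith
    rw [show (1:ℝ)/64 * (B / Y) * (up-um)^2 = (B * (up-um)^2) / (64*Y) from by
      field_simp]
    rw [div_le_iff₀ h64]
    calc B * (up-um)^2 ≤ B * (64*Y*(A-Sg)) := mul_le_mul_of_nonneg_left honev hBpos.le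
      _ = B*(A-Sg)*(64*Y) := by ring
  nlinarith [g1, g2]
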